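/- Let a > 0 and 0 < α < β < 1 (fractional Maxwell model: (1 + a D^α)σ = D^β ε). Define Φ_σ(s) = 1 + a s^α and Φ_ε(s) = s^β for complex s with Re s > 0, principal powers. Then Φ_σ(s) ≠ 0 and Φ_ε(s) ≠ 0 for all s with Re s > 0, and for all ξ ∈ ℝ and Re s > 0, s² + ξ² s^β/(1 + a s^α) ≠ 0. -/

import Mathlib

open Complex

lemma cpow_re_im_aux (s : ℂ) (hs0 : s ≠ 0) (μ : ℝ) :
    (s ^ (μ:ℂ)).re = Real.exp (μ * Real.log (‖s‖)) * Real.cos (μ * s.arg) ∧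
    (s ^ (μ:ℂ)).im = Real.exp (μ * Real.log (‖s‖)) * Real.sin (μ * s.arg) := by
  rw [Complex.cpow_def_of_ne_zero hs0]
  simp [Complex.exp_re, Complex.exp_im, Complex.log_re, Complex.log_im, Complex.mul_re,
    Complex.mul_im, mul_comm]

theorem stmt17 (a α β : ℝ) (ha : 0 < a) (hα : 0 < α) (hαβ : α < β) (hβ : β < 1)
    (s : ℂ) (hs : 0 < s.re) :
    (1 + (a : ℂ) * s ^ (α : ℂ) ≠ 0) ∧ (s ^ (β : ℂ) ≠ 0) ∧
    ∀ ξ : ℝ, s ^ 2 + (ξ ^ 2 : ℂ) * s ^ (β : ℂ) / (1 + (a : ℂ) * s ^ (α : ℂ)) ≠ 0 := by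
  have hs0 : s ≠ 0 := by
    intro h; rw [h] at hs; simp at hs
  set t := s.arg with htdef
  have ht : |t| < Real.pi / 2 := Complex.abs_arg_lt_pi_div_two_iff.2 (Or.inl hs)
  have htlt := abs_lt.1 ht
  have hpi : (0:ℝ) < Real.pi := Real.pi_pos
  have hΦre : 0 < (1 + (a : ℂ) * s ^ (α : ℂ)).re := by
    obtain ⟨hre, him⟩ := cpow_re_im_aux s hs0 α
    have hcos : 0 < Real.cos (α * t) := by
      apply Real.cos_pos_of_mem_Ioo
      constructor <;> nlinarith [htlt.1, htlt.2]
    simp only [Complex.add_re, Complex.one_re, Complex.mul_re, Complex.ofReal_re,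
      Complex.ofReal_im, hre, him]
    have h := Real.exp_pos (α * Real.log (‖s‖))
    nlinarith [mul_pos ha (mul_pos h hcos)]
  have hΦ : 1 + (a : ℂ) * s ^ (α : ℂ) ≠ 0 := by
    intro h; rw [h] at hΦre; simp at hΦre
  have hβ0 : s ^ (β : ℂ) ≠ 0 := by
    simp [Complex.cpow_eq_zero_iff, hs0]
  refine ⟨hΦ, hβ0, fun ξ => ?_⟩
  intro heq
  set γ : ℝ := 2 - β with hγdef
  set w : ℂ := s ^ ((γ:ℝ):ℂ) * (1 + (a : ℂ) * s ^ (α : ℂ)) with hwdef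
  have hkey : w = -((ξ^2 : ℝ) : ℂ) := by
    have h1 : s ^ 2 * (1 + (a : ℂ) * s ^ (α : ℂ)) + (ξ ^ 2 : ℂ) * s ^ (β : ℂ) = 0 := by
      field_simp at heq
      linear_combination heq
    have h2 : s ^ (β:ℂ) * w = s ^ 2 * (1 + (a : ℂ) * s ^ (α : ℂ)) := by
      rw [hwdef, ← mul_assoc, ← Complex.cpow_add _ _ hs0]
      have : (β:ℂ) + ((γ:ℝ):ℂ) = ((2:ℕ):ℂ) := by rw [hγdef]; push_cast; ring
      rw [this, Complex.cpow_natCast]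
    have h3 : s ^ (β:ℂ) * (w + ((ξ^2:ℝ):ℂ)) = 0 := by
      rw [mul_add, h2]
      push_cast
      linear_combination h1
    rcases mul_eq_zero.1 h3 with h | h
    · exact absurd h hβ0
    · linear_combination h
  have hwexp : w = s ^ ((γ:ℝ):ℂ) + (a:ℂ) * s ^ (((γ+α:ℝ)):ℂ) := by
    rw [hwdef, mul_add, mul_one]
    congr 1
    have : (((γ+α:ℝ)):ℂ) = ((γ:ℝ):ℂ) + ((α:ℝ):ℂ) := by push_cast; ring
    rw [this, Complex.cpow_add _ _ hs0]
    ring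
  obtain ⟨hre1, him1⟩ := cpow_re_im_aux s hs0 γ
  obtain ⟨hre2, him2⟩ := cpow_re_im_aux s hs0 (γ + α)
  set E1 := Real.exp (γ * Real.log (‖s‖)) with hE1
  set E2 := Real.exp ((γ+α) * Real.log (‖s‖)) with hE2
  have hE1p : 0 < E1 := Real.exp_pos _
  have hE2p : 0 < E2 := Real.exp_pos _
  have hwim : w.im = E1 * Real.sin (γ * t) + a * (E2 * Real.sin ((γ+α) * t)) := by
    rw [hwexp]
    simp only [Complex.add_im, Complex.mul_im, Complex.ofReal_re, Complex.ofReal_im,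
      him1, him2, hre2]
    ring
  have hwre : w.re = E1 * Real.cos (γ * t) + a * (E2 * Real.cos ((γ+α) * t)) := by
    rw [hwexp]
    simp only [Complex.add_re, Complex.mul_re, Complex.ofReal_re, Complex.ofReal_im,
      hre1, hre2, him2]
    ring
  have hkim : w.im = 0 := by rw [hkey, Complex.neg_im, Complex.ofReal_im, neg_zero]
  have hkre : w.re = -(ξ^2) := by rw [hkey, Complex.neg_re, Complex.ofReal_re]
  have hγ1 : 1 < γ := by rw [hγdef]; linarith
  have hγ2 : γ < 2 := by rw [hγdef]; linarith
  have hγα2 : γ + α < 2 := by rw [hγdef]; linarith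
  have hγα0 : 0 < γ + α := by linarith
  rcases lt_trichotomy t 0 with htneg | htz | htpos
  · have hb1 := mul_lt_mul_of_neg_right hγ2 htneg
    have hb2 := mul_lt_mul_of_neg_right hγα2 htneg
    have h1 : Real.sin (γ * t) < 0 :=
      Real.sin_neg_of_neg_of_neg_pi_lt (mul_neg_of_pos_of_neg (by linarith) htneg)
        (by linarith [htlt.1])
    have h2 : Real.sin ((γ+α) * t) < 0 :=
      Real.sin_neg_of_neg_of_neg_pi_lt (mul_neg_of_pos_of_neg hγα0 htneg)
        (by linarith [htlt.1])
    have h0 : E1 * Real.sin (γ * t) + a * (E2 * Real.sin ((γ+α) * t)) = 0 := by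
      rw [← hwim]; exact hkim
    have hx := mul_pos ha (mul_pos hE2p (neg_pos.2 h2))
    have hy := mul_pos hE1p (neg_pos.2 h1)
    linarith
  · rw [htz] at hwre
    simp at hwre
    linarith [mul_pos ha hE2p, sq_nonneg ξ, hE1p]
  · have hb1 := mul_lt_mul_of_pos_right hγ2 htpos
    have hb2 := mul_lt_mul_of_pos_right hγα2 htpos
    have h1 : 0 < Real.sin (γ * t) :=
      Real.sin_pos_of_pos_of_lt_pi (mul_pos (by linarith) htpos) (by linarith [htlt.2])
    have h2 : 0 < Real.sin ((γ+α) * t) :=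
      Real.sin_pos_of_pos_of_lt_pi (mul_pos hγα0 htpos) (by linarith [htlt.2])
    have h0 : E1 * Real.sin (γ * t) + a * (E2 * Real.sin ((γ+α) * t)) = 0 := by
      rw [← hwim]; exact hkim
    linarith [mul_pos hE1p h1, mul_pos ha (mul_pos hE2p h2)]
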